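/- Let k > 0, 0 < ε ≤ k², and let x, y ≥ 0 be real numbers (representing ‖∇v‖² and ‖v‖² respectively). Then |(x − k² y) − i ε y| ≥ (ε / (4 k²)) (x + k² y). (This is the scalar inequality underlying the coercivity of the Helmholtz sesquilinear form with absorption in the wavenumber-weighted energy norm.) -/

import Mathlib

/-- Scalar inequality underlying coercivity of the Helmholtz sesquilinear form
with absorption in the wavenumber-weighted energy norm. -/
theorem stmt0 (k ε x y : ℝ) (hk : 0 < k) (hε : 0 < ε) (hεk : ε ≤ k ^ 2)
    (hx : 0 ≤ x) (hy : 0 ≤ y) :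
    (ε / (4 * k ^ 2)) * (x + k ^ 2 * y) ≤
      ‖((x - k ^ 2 * y : ℝ) : ℂ) - Complex.I * ((ε * y : ℝ) : ℂ)‖ := by
  set z : ℂ := ((x - k ^ 2 * y : ℝ) : ℂ) - Complex.I * ((ε * y : ℝ) : ℂ) with hz
  have hre : z.re = x - k ^ 2 * y := by simp [hz, ← Complex.ofReal_pow]
  have him : z.im = -(ε * y) := by simp [hz, ← Complex.ofReal_pow]
  have h1 : |x - k ^ 2 * y| ≤ ‖z‖ := by
    rw [← hre]; exact Complex.abs_re_le_norm z
  have h2 : ε * y ≤ ‖z‖ := by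
    have := Complex.abs_im_le_norm z
    rw [him, abs_neg, abs_of_nonneg (by positivity)] at this
    exact this
  have hk2 : (0:ℝ) < k ^ 2 := by positivity
  rcases le_total x (2 * k ^ 2 * y) with h | h
  · refine le_trans ?_ h2
    rw [div_mul_eq_mul_div, div_le_iff₀ (by positivity)]
    nlinarith
  · have h3 : x - k ^ 2 * y ≤ ‖z‖ := le_trans (le_abs_self _) h1
    refine le_trans ?_ h3
    rw [div_mul_eq_mul_div, div_le_iff₀ (by positivity)]
    nlinarith [mul_nonneg hε.le hy, mul_le_mul_of_nonneg_right hεk hx,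
      mul_le_mul_of_nonneg_right hεk (mul_nonneg hk2.le hy)]
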